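/- arXiv:1104.1620 — 2 statements merged into one kernel-verified Lean document; each statement's English description precedes it below -/
import Mathlib

section
/- Let (ε_j)_{j≥0} be a nonincreasing sequence of numbers in [0,1) with limsup_{n→∞} ε_n^{1/n} < 1. Then there exist constants c < ∞ and u > 0, depending only on the sequence (ε_j), such that the following holds. Let (X_n)_{n≥0} be any time-homogeneous Markov chain on the state space ℕ = {0,1,2,...} whose transition probabilities satisfy p(j, j+1) = 1 − p(j, 0) and p(j,0) ≤ ε_j for every j (i.e., from state j the chain moves either to j+1 or back to 0, and the probability of moving to 0 is at most ε_j). Then for every n ≥ 0, P{X_n < n/2 | X_0 = 0} ≤ c e^{−nu}. -/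
open MeasureTheory ProbabilityTheory Filter Real

private def mdist (p : ℕ → ℕ → ℝ) : ℕ → ℕ → ℝ
  | 0, k => if k = 0 then 1 else 0
  | n+1, 0 => ∑ j ∈ Finset.range (n+1), mdist p n j * p j 0
  | n+1, k+1 => mdist p n k * p k (k+1)

private lemma mdist_nonneg {p : ℕ → ℕ → ℝ} (hp : ∀ j m, 0 ≤ p j m) :
    ∀ n k, 0 ≤ mdist p n k := by
  intro n
  induction n with
  | zero => intro k; simp only [mdist]; split <;> norm_num
  | succ n ih =>
    intro k
    cases k with
    | zero =>
      simp only [mdist]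
      exact Finset.sum_nonneg fun j _ => mul_nonneg (ih j) (hp j 0)
    | succ k => exact mul_nonneg (ih k) (hp k (k+1))

private lemma mdist_eq_zero {p : ℕ → ℕ → ℝ} :
    ∀ n k, n < k → mdist p n k = 0 := by
  intro n
  induction n with
  | zero => intro k hk; simp only [mdist]; rw [if_neg (by omega)]
  | succ n ih =>
    intro k hk
    cases k with
    | zero => omega
    | succ k => simp only [mdist]; rw [ih k (by omega)]; ring

private lemma mdist_shift {p : ℕ → ℕ → ℝ} :
    ∀ k n, k ≤ n → mdist p n k = mdist p (n - k) 0 * ∏ i ∈ Finset.range k, p i (i+1) := by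
  intro k
  induction k with
  | zero => intro n _; simp
  | succ k ih =>
    intro n hn
    obtain ⟨n', rfl⟩ : ∃ n', n = n' + 1 := ⟨n - 1, by omega⟩
    simp only [mdist]
    rw [ih n' (by omega), Finset.prod_range_succ]
    have : n' + 1 - (k + 1) = n' - k := by omega
    rw [this]; ring

private lemma one_sub_sum_le_prod (s : Finset ℕ) (f : ℕ → ℝ) (h0 : ∀ i ∈ s, 0 ≤ f i)
    (h1 : ∀ i ∈ s, f i ≤ 1) :
    1 - ∑ i ∈ s, f i ≤ ∏ i ∈ s, (1 - f i) := by
  induction s using Finset.cons_induction with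
  | empty => simp
  | cons a s ha ih =>
    rw [Finset.sum_cons, Finset.prod_cons]
    have h0' : ∀ i ∈ s, 0 ≤ f i := fun i hi => h0 i (Finset.mem_cons_of_mem hi)
    have h1' : ∀ i ∈ s, f i ≤ 1 := fun i hi => h1 i (Finset.mem_cons_of_mem hi)
    have ha0 : 0 ≤ f a := h0 a (Finset.mem_cons_self a s)
    have ha1 : f a ≤ 1 := h1 a (Finset.mem_cons_self a s)
    have hsum : ∑ i ∈ s, f i ≥ 0 := Finset.sum_nonneg h0'
    calc 1 - (f a + ∑ i ∈ s, f i) ≤ (1 - f a) * (1 - ∑ i ∈ s, f i) := by nlinarith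
    _ ≤ (1 - f a) * ∏ i ∈ s, (1 - f i) := by
        apply mul_le_mul_of_nonneg_left (ih h0' h1') (by linarith)


-- ε is eventually dominated by a geometric sequence
private lemma eps_geom (ε : ℕ → ℝ) (hε_mem : ∀ j, ε j ∈ Set.Ico (0 : ℝ) 1)
    (hε_limsup : Filter.limsup (fun n => (ε n) ^ ((1 : ℝ) / n)) Filter.atTop < 1) :
    ∃ C ρ : ℝ, 0 < ρ ∧ ρ < 1 ∧ 1 ≤ C ∧ ∀ j, ε j ≤ C * ρ ^ j := by
  set L := Filter.limsup (fun n => (ε n) ^ ((1 : ℝ) / n)) Filter.atTop with hL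
  set ρ := (max L 0 + 1) / 2 with hρ
  have hρ0 : 0 < ρ := by
    have : (0:ℝ) ≤ max L 0 := le_max_right _ _
    rw [hρ]; linarith
  have hρ1 : ρ < 1 := by
    have h1 : max L 0 < 1 := max_lt hε_limsup one_pos
    rw [hρ]; linarith
  have hLρ : L < ρ := by
    have : L ≤ max L 0 := le_max_left _ _
    have h1 : max L 0 < 1 := max_lt hε_limsup one_pos
    rw [hρ]; linarith
  have hev : ∀ᶠ n in Filter.atTop, (ε n) ^ ((1:ℝ)/n) < ρ := by
    refine Filter.eventually_lt_of_limsup_lt hLρ (Filter.isBoundedUnder_of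
      ⟨1, fun n => Real.rpow_le_one (hε_mem n).1 (hε_mem n).2.le (by positivity)⟩)
  obtain ⟨N, hN⟩ := Filter.eventually_atTop.1 hev
  refine ⟨(ρ ^ (N+1))⁻¹, ρ, hρ0, hρ1, ?_, ?_⟩
  · rw [le_inv_comm₀ one_pos (by positivity), inv_one]
    exact pow_le_one₀ hρ0.le hρ1.le
  · intro j
    rcases le_or_gt (N+1) j with hj | hj
    · have h1 : (ε j) ^ ((1:ℝ)/j) < ρ := hN j (by omega)
      have hj0 : j ≠ 0 := by omega
      have : ε j = ((ε j) ^ ((1:ℝ)/j)) ^ (j:ℕ) := by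
        rw [← Real.rpow_natCast ((ε j) ^ ((1:ℝ)/j)) j, ← Real.rpow_mul (hε_mem j).1]
        rw [one_div_mul_cancel (by exact_mod_cast hj0), Real.rpow_one]
      have h2 : ε j ≤ ρ ^ j := by
        rw [this]
        exact pow_le_pow_left₀ (Real.rpow_nonneg (hε_mem j).1 _) h1.le j
      calc ε j ≤ ρ ^ j := h2
        _ ≤ (ρ ^ (N+1))⁻¹ * ρ ^ j := by
            nth_rewrite 1 [← one_mul (ρ ^ j)]
            apply mul_le_mul_of_nonneg_right _ (by positivity)
            rw [le_inv_comm₀ one_pos (by positivity), inv_one]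
            exact pow_le_one₀ hρ0.le hρ1.le
    · have h1 : ε j ≤ 1 := (hε_mem j).2.le
      have h2 : ρ ^ (N+1) ≤ ρ ^ j := pow_le_pow_of_le_one hρ0.le hρ1.le (by omega)
      calc ε j ≤ 1 := h1
        _ = (ρ ^ (N+1))⁻¹ * ρ ^ (N+1) := by rw [inv_mul_cancel₀ (by positivity)]
        _ ≤ (ρ ^ (N+1))⁻¹ * ρ ^ j := by
            apply mul_le_mul_of_nonneg_left h2 (by positivity)

-- uniform lower bound on partial products of (1 - ε j)
private lemma eps_prod (ε : ℕ → ℝ) (hε_anti : Antitone ε) (hε_mem : ∀ j, ε j ∈ Set.Ico (0 : ℝ) 1)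
    {C ρ : ℝ} (hρ0 : 0 < ρ) (hρ1 : ρ < 1) (hC : 1 ≤ C) (hgeo : ∀ j, ε j ≤ C * ρ ^ j) :
    ∃ δ : ℝ, 0 < δ ∧ δ ≤ 1/2 ∧ ∀ M, δ ≤ ∏ j ∈ Finset.range M, (1 - ε j) := by
  obtain ⟨J, hJ⟩ : ∃ J : ℕ, ρ ^ J < (1 - ρ) / (2 * C) / C := by
    apply exists_pow_lt_of_lt_one _ hρ1
    have hC0 : (0:ℝ) < C := by linarith
    exact div_pos (div_pos (by linarith) (by linarith)) hC0
  have htail : ∀ M, J ≤ M → ∑ j ∈ Finset.Ico J M, ε j ≤ 1/2 := by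
    intro M hM
    have h1 : ∑ j ∈ Finset.Ico J M, ε j ≤ ∑ j ∈ Finset.Ico J M, C * ρ ^ j :=
      Finset.sum_le_sum fun j _ => hgeo j
    have h2 : ∑ j ∈ Finset.Ico J M, C * ρ ^ j = C * ρ ^ J * ∑ i ∈ Finset.range (M - J), ρ ^ i := by
      rw [Finset.sum_Ico_eq_sum_range, Finset.mul_sum]
      exact Finset.sum_congr rfl fun i _ => by rw [pow_add]; ring
    have h3 : ∑ i ∈ Finset.range (M - J), ρ ^ i ≤ (1 - ρ)⁻¹ := by
      calc ∑ i ∈ Finset.range (M - J), ρ ^ i ≤ ∑' i : ℕ, ρ ^ i :=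
            Summable.sum_le_tsum _ (fun i _ => by positivity)
              (summable_geometric_of_lt_one hρ0.le hρ1)
        _ = (1 - ρ)⁻¹ := tsum_geometric_of_lt_one hρ0.le hρ1
    have hC0 : (0:ℝ) < C := by linarith
    have h4 : C * ρ ^ J * (1 - ρ)⁻¹ ≤ 1/2 := by
      rw [div_div] at hJ
      have h5 : C * ρ ^ J * (1 - ρ)⁻¹ < C * ((1 - ρ) / (2 * C * C)) * (1-ρ)⁻¹ := by
        apply mul_lt_mul_of_pos_right _ (by rw [inv_pos]; linarith)
        exact mul_lt_mul_of_pos_left (by linarith [hJ]) hC0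
      have hne1 : (1:ℝ) - ρ ≠ 0 := by linarith
      have hneC : C ≠ 0 := by linarith
      have h6 : C * ((1 - ρ) / (2 * C * C)) * (1-ρ)⁻¹ = (2*C)⁻¹ := by
        field_simp
      have h7 : (2*C)⁻¹ ≤ 1/2 := by
        rw [one_div]
        gcongr
        linarith
      linarith
    calc ∑ j ∈ Finset.Ico J M, ε j ≤ C * ρ ^ J * ∑ i ∈ Finset.range (M - J), ρ ^ i := by
          rw [← h2] at *; linarith
      _ ≤ C * ρ ^ J * (1 - ρ)⁻¹ := by
          apply mul_le_mul_of_nonneg_left h3 (by positivity)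
      _ ≤ 1/2 := h4
  have hε01 : ε 0 < 1 := (hε_mem 0).2
  refine ⟨(1 - ε 0) ^ J / 2, div_pos (pow_pos (by linarith) J) two_pos, ?_, ?_⟩
  · have h1 : (1 - ε 0) ^ J ≤ 1 := pow_le_one₀ (by have := (hε_mem 0).2; linarith) (by have := (hε_mem 0).1; linarith)
    linarith
  · intro M
    have hfac : ∀ j, 0 ≤ 1 - ε j := fun j => by have := (hε_mem j).2; linarith
    have hfac1 : ∀ j, 1 - ε j ≤ 1 := fun j => by have := (hε_mem j).1; linarith
    have hmono : ∀ j, 1 - ε 0 ≤ 1 - ε j := fun j => by have := hε_anti (Nat.zero_le j); linarith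
    rcases le_or_gt M J with hMJ | hMJ
    · calc (1 - ε 0) ^ J / 2 ≤ (1 - ε 0) ^ J := by
            have : 0 ≤ (1 - ε 0) ^ J := pow_nonneg (by linarith) J
            linarith
        _ ≤ (1 - ε 0) ^ M := pow_le_pow_of_le_one (hfac 0) (hfac1 0) hMJ
        _ ≤ ∏ j ∈ Finset.range M, (1 - ε j) := by
            have he : (1 - ε 0) ^ M = ∏ _j ∈ Finset.range M, (1 - ε 0) := by
              rw [Finset.prod_const, Finset.card_range]
            rw [he]
            exact Finset.prod_le_prod (fun j _ => hfac 0) (fun j _ => hmono j)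
    · have hsplit : ∏ j ∈ Finset.range M, (1 - ε j)
          = (∏ j ∈ Finset.range J, (1 - ε j)) * ∏ j ∈ Finset.Ico J M, (1 - ε j) := by
        rw [Finset.range_eq_Ico, ← Finset.prod_Ico_consecutive _ (Nat.zero_le J) hMJ.le, Finset.range_eq_Ico]
      rw [hsplit]
      have h1 : (1 - ε 0) ^ J ≤ ∏ j ∈ Finset.range J, (1 - ε j) := by
        have he : (1 - ε 0) ^ J = ∏ _j ∈ Finset.range J, (1 - ε 0) := by
          rw [Finset.prod_const, Finset.card_range]
        rw [he]
        exact Finset.prod_le_prod (fun j _ => hfac 0) (fun j _ => hmono j)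
      have h2 : (1:ℝ)/2 ≤ ∏ j ∈ Finset.Ico J M, (1 - ε j) := by
        have := one_sub_sum_le_prod (Finset.Ico J M) ε (fun i _ => (hε_mem i).1)
          (fun i _ => (hε_mem i).2.le)
        have := htail M hMJ.le
        linarith
      calc (1 - ε 0) ^ J / 2 = (1 - ε 0) ^ J * (1/2) := by ring
        _ ≤ (∏ j ∈ Finset.range J, (1 - ε j)) * ∏ j ∈ Finset.Ico J M, (1 - ε j) := by
            apply mul_le_mul h1 h2 (by norm_num)
            exact Finset.prod_nonneg fun j _ => hfac j

private lemma eps_z (ε : ℕ → ℝ) {C ρ δ : ℝ} (hρ0 : 0 < ρ) (hρ1 : ρ < 1) (hC : 1 ≤ C)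
    (hε0 : ∀ j, 0 ≤ ε j) (hgeo : ∀ j, ε j ≤ C * ρ ^ j) (hδ0 : 0 < δ) :
    ∃ z : ℝ, 1 < z ∧ z ≤ 2 ∧ ∀ T, ∑ j ∈ Finset.range T, ε j * (z ^ (j+1) - 1) ≤ δ / 2 := by
  have hC0 : (0:ℝ) < C := by linarith
  set σ := (1 + ρ) / 2 with hσdef
  have hσρ : ρ < σ := by rw [hσdef]; linarith
  have hσ1 : σ < 1 := by rw [hσdef]; linarith
  have hσ0 : 0 < σ := by rw [hσdef]; linarith
  have h1σ : (0:ℝ) < 1 - σ := by linarith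
  set η := min (min ((σ - ρ) / ρ) 1) (δ * (1 - σ)^2 / (8 * C)) with hηdef
  have hη0 : 0 < η := by
    apply lt_min (lt_min (div_pos (by linarith) hρ0) one_pos)
    positivity
  have hη1 : η ≤ 1 := le_trans (min_le_left _ _) (min_le_right _ _)
  have hησ : η ≤ (σ - ρ) / ρ := le_trans (min_le_left _ _) (min_le_left _ _)
  have hηδ : η ≤ δ * (1 - σ)^2 / (8 * C) := min_le_right _ _
  refine ⟨1 + η, by linarith, by linarith, ?_⟩
  set z := 1 + η with hzdef
  have hz1 : 1 < z := by rw [hzdef]; linarith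
  have hz2 : z ≤ 2 := by rw [hzdef]; linarith
  have hz0 : 0 < z := by linarith
  have hρz : ρ * z ≤ σ := by
    have h := (le_div_iff₀ hρ0).1 hησ
    rw [hzdef]; nlinarith
  -- pointwise bound
  have hpt : ∀ j : ℕ, ε j * (z ^ (j+1) - 1) ≤ 2 * C * η * ((j+1 : ℝ) * σ ^ j) := by
    intro j
    have hz_pow_ge : (1:ℝ) ≤ z ^ (j+1) := one_le_pow₀ hz1.le
    have hgeom_id : (∑ i ∈ Finset.range (j+1), z ^ i) * (z - 1) = z ^ (j+1) - 1 :=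
      geom_sum_mul z (j+1)
    have hsum_le : ∑ i ∈ Finset.range (j+1), z ^ i ≤ (j+1 : ℝ) * z ^ (j+1) := by
      calc ∑ i ∈ Finset.range (j+1), z ^ i ≤ ∑ _i ∈ Finset.range (j+1), z ^ (j+1) :=
            Finset.sum_le_sum fun i hi => pow_le_pow_right₀ hz1.le
              (Finset.mem_range.1 hi).le
        _ = (j+1 : ℝ) * z ^ (j+1) := by
            rw [Finset.sum_const, Finset.card_range]; push_cast; ring
    have hzm1 : z ^ (j+1) - 1 ≤ (j+1 : ℝ) * η * z ^ (j+1) := by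
      rw [← hgeom_id]
      have hz1' : z - 1 = η := by rw [hzdef]; ring
      rw [hz1']
      calc (∑ i ∈ Finset.range (j+1), z ^ i) * η ≤ ((j+1 : ℝ) * z ^ (j+1)) * η :=
            mul_le_mul_of_nonneg_right hsum_le hη0.le
        _ = (j+1 : ℝ) * η * z ^ (j+1) := by ring
    have h1 : ε j * (z ^ (j+1) - 1) ≤ (C * ρ ^ j) * ((j+1 : ℝ) * η * z ^ (j+1)) := by
      apply mul_le_mul (hgeo j) hzm1 (by linarith) (by positivity)
    have h2 : (C * ρ ^ j) * ((j+1 : ℝ) * η * z ^ (j+1)) = C * η * (j+1 : ℝ) * ((ρ*z) ^ j * z) := by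
      rw [mul_pow]; ring
    have h3 : (ρ*z) ^ j ≤ σ ^ j := pow_le_pow_left₀ (by positivity) hρz j
    have h4 : C * η * (j+1 : ℝ) * ((ρ*z) ^ j * z) ≤ C * η * (j+1 : ℝ) * (σ ^ j * 2) := by
      apply mul_le_mul_of_nonneg_left _ (by positivity)
      apply mul_le_mul h3 hz2 hz0.le (by positivity)
    calc ε j * (z ^ (j+1) - 1) ≤ C * η * (j+1 : ℝ) * ((ρ*z) ^ j * z) := by rw [← h2]; exact h1
      _ ≤ C * η * (j+1 : ℝ) * (σ ^ j * 2) := h4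
      _ = 2 * C * η * ((j+1 : ℝ) * σ ^ j) := by ring
  -- sum of (j+1) σ^j
  have hσnorm : ‖σ‖ < 1 := by rw [Real.norm_eq_abs, abs_of_nonneg hσ0.le]; exact hσ1
  have hsumm1 : Summable (fun j : ℕ => (j : ℝ) * σ ^ j) := by
    have := summable_pow_mul_geometric_of_norm_lt_one 1 hσnorm (R := ℝ)
    simpa using this
  have hsumm2 : Summable (fun j : ℕ => σ ^ j) := summable_geometric_of_lt_one hσ0.le hσ1
  have hsumm3 : Summable (fun j : ℕ => (j+1 : ℝ) * σ ^ j) := by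
    have : (fun j : ℕ => (j+1 : ℝ) * σ ^ j) = fun j : ℕ => (j : ℝ) * σ ^ j + σ ^ j := by
      funext j; ring
    rw [this]; exact hsumm1.add hsumm2
  have htsum : ∑' j : ℕ, (j+1 : ℝ) * σ ^ j = ((1-σ)^2)⁻¹ := by
    have heq : (fun j : ℕ => (j+1 : ℝ) * σ ^ j) = fun j : ℕ => (j : ℝ) * σ ^ j + σ ^ j := by
      funext j; ring
    rw [heq, Summable.tsum_add hsumm1 hsumm2, tsum_coe_mul_geometric_of_norm_lt_one hσnorm,
      tsum_geometric_of_lt_one hσ0.le hσ1]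
    have : (1:ℝ) - σ ≠ 0 := by linarith
    field_simp
    ring
  have hS : ∀ T, ∑ j ∈ Finset.range T, (j+1 : ℝ) * σ ^ j ≤ ((1-σ)^2)⁻¹ := by
    intro T
    rw [← htsum]
    exact Summable.sum_le_tsum _ (fun j _ => by positivity) hsumm3
  intro T
  calc ∑ j ∈ Finset.range T, ε j * (z ^ (j+1) - 1)
      ≤ ∑ j ∈ Finset.range T, 2 * C * η * ((j+1 : ℝ) * σ ^ j) :=
        Finset.sum_le_sum fun j _ => hpt j
    _ = 2 * C * η * ∑ j ∈ Finset.range T, (j+1 : ℝ) * σ ^ j := by rw [Finset.mul_sum]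
    _ ≤ 2 * C * η * ((1-σ)^2)⁻¹ := by
        apply mul_le_mul_of_nonneg_left (hS T) (by positivity)
    _ ≤ 2 * C * (δ * (1 - σ)^2 / (8 * C)) * ((1-σ)^2)⁻¹ := by
        apply mul_le_mul_of_nonneg_right _ (by positivity)
        exact mul_le_mul_of_nonneg_left hηδ (by positivity)
    _ = δ / 4 := by
        have h1 : (1:ℝ) - σ ≠ 0 := by linarith
        have h2 : C ≠ 0 := by linarith
        field_simp
        ring
    _ ≤ δ / 2 := by linarith

private def seqOf (n : ℕ) (v : Fin (n+1) → ℕ) : ℕ → ℕ := fun i => if h : i < n+1 then v ⟨i, h⟩ else 0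

/-- **Exponential growth for a Markov chain that either steps up or resets to 0.**
If `(ε j)` is a nonincreasing sequence in `[0,1)` with `limsup ε_n^{1/n} < 1`, then there are
constants `c` and `u > 0`, depending only on `ε`, such that for any time-homogeneous Markov
chain `X` on `ℕ` that from state `j` jumps to `j+1` or to `0`, with `p(j,0) ≤ ε j`, we have
`P(X_n < n/2 ∣ X_0 = 0) ≤ c e^{-u n}`. -/
theorem markov_chain_reset_exponential_bound
    (ε : ℕ → ℝ) (hε_anti : Antitone ε) (hε_mem : ∀ j, ε j ∈ Set.Ico (0 : ℝ) 1)
    (hε_limsup : Filter.limsup (fun n => (ε n) ^ ((1 : ℝ) / n)) Filter.atTop < 1) :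
    ∃ c u : ℝ, 0 < u ∧
      ∀ (Ω : Type) (_ : MeasureSpace Ω) (_ : IsProbabilityMeasure (ℙ : Measure Ω))
        (X : ℕ → Ω → ℕ) (p : ℕ → ℕ → ℝ),
        (∀ n, Measurable (X n)) →
        (∀ j m, 0 ≤ p j m) →
        (∀ j, p j 0 + p j (j + 1) = 1) →
        (∀ j m, m ≠ 0 → m ≠ j + 1 → p j m = 0) →
        (∀ j, p j 0 ≤ ε j) →
        -- time-homogeneous Markov property with transition matrix `p`:
        (∀ n (s : ℕ → ℕ) (m : ℕ),
          ℙ {ω | (∀ i ≤ n, X i ω = s i) ∧ X (n + 1) ω = m}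
            = ℙ {ω | ∀ i ≤ n, X i ω = s i} * ENNReal.ofReal (p (s n) m)) →
        ∀ n : ℕ,
          (ℙ[|{ω | X 0 ω = 0}]) {ω | (X n ω : ℝ) < n / 2}
            ≤ ENNReal.ofReal (c * Real.exp (-u * n)) := by
  classical
  obtain ⟨C, ρ, hρ0, hρ1, hC, hgeo⟩ := eps_geom ε hε_mem hε_limsup
  obtain ⟨δ, hδ0, hδhalf, hδprod⟩ := eps_prod ε hε_anti hε_mem hρ0 hρ1 hC hgeo
  obtain ⟨z, hz1, hz2, hzsum⟩ := eps_z ε hρ0 hρ1 hC (fun j => (hε_mem j).1) hgeo hδ0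
  have hz0 : (0:ℝ) < z := by linarith
  have hzm1 : (0:ℝ) < z - 1 := by linarith
  refine ⟨z / (z - 1), Real.log z / 2, by have := Real.log_pos hz1; linarith, ?_⟩
  have hu0 : 0 < Real.log z := Real.log_pos hz1
  intro Ω inst instP X p hX hp0 hsump hpz hpε hMarkov
  -- basic facts about p
  have hp01 : ∀ j, p j 0 ≤ 1 := fun j => by
    have h1 := hsump j; have h2 := hp0 j (j+1); linarith
  have hps1 : ∀ j, p j (j+1) ≤ 1 := fun j => by
    have h1 := hsump j; have h2 := hp0 j 0; linarith
  have hprod_le_one : ∀ T, ∏ i ∈ Finset.range T, p i (i+1) ≤ 1 :=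
    fun T => Finset.prod_le_one (fun i _ => hp0 i (i+1)) (fun i _ => hps1 i)
  have hprod_ge : ∀ T, δ ≤ ∏ i ∈ Finset.range T, p i (i+1) := by
    intro T
    refine le_trans (hδprod T) (Finset.prod_le_prod (fun i _ => ?_) (fun i _ => ?_))
    · have := (hε_mem i).2; linarith
    · have h1 := hsump i; have h2 := hpε i; linarith
  -- the sequence A j (probability of first return at time j+1, without survival factors)
  set A : ℕ → ℝ := fun j => (∏ i ∈ Finset.range j, p i (i+1)) * p j 0 with hA
  have hA0 : ∀ j, 0 ≤ A j := fun j =>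
    mul_nonneg (Finset.prod_nonneg fun i _ => hp0 i (i+1)) (hp0 j 0)
  have hAε : ∀ j, A j ≤ ε j := by
    intro j
    calc A j ≤ 1 * p j 0 := mul_le_mul_of_nonneg_right (hprod_le_one j) (hp0 j 0)
      _ = p j 0 := one_mul _
      _ ≤ ε j := hpε j
  have hAsum : ∀ T, ∑ j ∈ Finset.range T, A j = 1 - ∏ i ∈ Finset.range T, p i (i+1) := by
    intro T
    induction T with
    | zero => simp
    | succ T ihT =>
      rw [Finset.sum_range_succ, Finset.prod_range_succ, ihT, hA]
      have h1 := hsump T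
      have h2 : p T (T+1) = 1 - p T 0 := by linarith
      rw [h2]; ring
  have hAz : ∀ T, ∑ j ∈ Finset.range T, A j * z^(j+1) ≤ 1 := by
    intro T
    have h1 : ∑ j ∈ Finset.range T, A j * z^(j+1)
        = ∑ j ∈ Finset.range T, A j + ∑ j ∈ Finset.range T, A j * (z^(j+1) - 1) := by
      rw [← Finset.sum_add_distrib]
      exact Finset.sum_congr rfl fun j _ => by ring
    have h2 : ∑ j ∈ Finset.range T, A j * (z^(j+1) - 1)
        ≤ ∑ j ∈ Finset.range T, ε j * (z^(j+1) - 1) := by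
      apply Finset.sum_le_sum
      intro j _
      apply mul_le_mul_of_nonneg_right (hAε j)
      have : (1:ℝ) ≤ z^(j+1) := one_le_pow₀ hz1.le
      linarith
    have h3 := hzsum T
    have h4 := hprod_ge T
    rw [h1, hAsum T]
    linarith
  -- exponential decay of the return probability q t = mdist p t 0
  have hq : ∀ t, mdist p t 0 ≤ (z⁻¹)^t := by
    intro t
    induction t using Nat.strong_induction_on with
    | _ t iht =>
      match t with
      | 0 => simp [mdist]
      | (t+1) =>
        have hqdef : mdist p (t+1) 0 = ∑ j ∈ Finset.range (t+1), mdist p t j * p j 0 := by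
          simp [mdist]
        rw [hqdef]
        have hterm : ∀ j ∈ Finset.range (t+1),
            mdist p t j * p j 0 ≤ (z⁻¹)^(t+1) * (A j * z^(j+1)) := by
          intro j hj
          have hjt : j ≤ t := by
            have := Finset.mem_range.1 hj; omega
          rw [mdist_shift j t hjt]
          have h5 : mdist p (t-j) 0 ≤ (z⁻¹)^(t-j) := iht (t-j) (by omega)
          have h7 : (z⁻¹ : ℝ)^(t-j) = (z⁻¹)^(t+1) * z^(j+1) := by
            have ht1 : t+1 = (t-j) + (j+1) := by omega
            rw [ht1, pow_add, mul_assoc, ← mul_pow, inv_mul_cancel₀ (ne_of_gt hz0),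
              one_pow, mul_one]
          have h8 : 0 ≤ (∏ i ∈ Finset.range j, p i (i+1)) * p j 0 := hA0 j
          calc mdist p (t-j) 0 * (∏ i ∈ Finset.range j, p i (i+1)) * p j 0
              = mdist p (t-j) 0 * ((∏ i ∈ Finset.range j, p i (i+1)) * p j 0) := by ring
            _ ≤ (z⁻¹)^(t-j) * ((∏ i ∈ Finset.range j, p i (i+1)) * p j 0) :=
                mul_le_mul_of_nonneg_right h5 h8
            _ = (z⁻¹)^(t+1) * (A j * z^(j+1)) := by rw [h7, hA]; ring
        calc ∑ j ∈ Finset.range (t+1), mdist p t j * p j 0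
            ≤ ∑ j ∈ Finset.range (t+1), (z⁻¹)^(t+1) * (A j * z^(j+1)) :=
              Finset.sum_le_sum hterm
          _ = (z⁻¹)^(t+1) * ∑ j ∈ Finset.range (t+1), A j * z^(j+1) := by
              rw [Finset.mul_sum]
          _ ≤ (z⁻¹)^(t+1) * 1 :=
              mul_le_mul_of_nonneg_left (hAz (t+1)) (by positivity)
          _ = (z⁻¹)^(t+1) := mul_one _
  have hmk : ∀ n k, k ≤ n → mdist p n k ≤ (z⁻¹)^(n-k) := by
    intro n k hk
    rw [mdist_shift k n hk]
    calc mdist p (n-k) 0 * ∏ i ∈ Finset.range k, p i (i+1)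
        ≤ (z⁻¹)^(n-k) * 1 := by
          apply mul_le_mul (hq (n-k)) (hprod_le_one k)
            (Finset.prod_nonneg fun i _ => hp0 i (i+1)) (by positivity)
      _ = (z⁻¹)^(n-k) := mul_one _
  -- the analytic final bound
  have hreal : ∀ n : ℕ, ∑ k ∈ (Finset.range (n+1)).filter (fun k => 2*k < n), mdist p n k
      ≤ z / (z-1) * Real.exp (-(Real.log z / 2) * n) := by
    intro n
    set K := (n+1)/2 with hK
    have hstep1 : ∑ k ∈ (Finset.range (n+1)).filter (fun k => 2*k < n), mdist p n k
        ≤ ∑ k ∈ (Finset.range (n+1)).filter (fun k => 2*k < n), (z⁻¹)^n * z^k := by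
      apply Finset.sum_le_sum
      intro k hk
      obtain ⟨hk1, hk2⟩ := Finset.mem_filter.1 hk
      have hkn : k ≤ n := by have := Finset.mem_range.1 hk1; omega
      have h7 : (z⁻¹ : ℝ)^(n-k) = (z⁻¹)^n * z^k := by
        have hn1 : n = (n-k) + k := by omega
        nth_rewrite 2 [hn1]
        rw [pow_add, mul_assoc, ← mul_pow, inv_mul_cancel₀ (ne_of_gt hz0), one_pow, mul_one]
      rw [← h7]
      exact hmk n k hkn
    have hsub : (Finset.range (n+1)).filter (fun k => 2*k < n) ⊆ Finset.range K := by
      intro k hk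
      obtain ⟨hk1, hk2⟩ := Finset.mem_filter.1 hk
      rw [Finset.mem_range]
      omega
    have hstep2 : ∑ k ∈ (Finset.range (n+1)).filter (fun k => 2*k < n), (z⁻¹)^n * z^k
        ≤ ∑ k ∈ Finset.range K, (z⁻¹)^n * z^k :=
      Finset.sum_le_sum_of_subset_of_nonneg hsub (fun k _ _ => by positivity)
    have hstep3 : ∑ k ∈ Finset.range K, (z⁻¹)^n * z^k = (z⁻¹)^n * ((z^K - 1)/(z-1)) := by
      rw [← Finset.mul_sum, geom_sum_eq (ne_of_gt hz1) K]
    have hstep4 : (z⁻¹:ℝ)^n * ((z^K - 1)/(z-1)) ≤ (z⁻¹)^n * (z^K / (z-1)) := by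
      gcongr
      linarith
    have hpowK : (z⁻¹:ℝ)^n * z^K ≤ z * Real.exp (-(Real.log z / 2) * n) := by
      have hKle : (K:ℝ) ≤ ((n:ℝ)+1)/2 := by
        have h1 : ((K:ℕ):ℝ) ≤ ((n+1:ℕ):ℝ) / 2 := by
          have := Nat.cast_div_le (α := ℝ) (m := n+1) (n := 2)
          simpa using this
        push_cast at h1 ⊢
        linarith
      have h1 : (z:ℝ)^K = z ^ ((K:ℕ):ℝ) := (Real.rpow_natCast z K).symm
      have h2 : (z⁻¹:ℝ)^n = z ^ (-(n:ℝ)) := by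
        rw [Real.rpow_neg hz0.le, Real.rpow_natCast, inv_pow]
      rw [h1, h2, ← Real.rpow_add hz0]
      have h3 : -(n:ℝ) + (K:ℝ) ≤ 1 - (n:ℝ)/2 := by linarith
      have h4 : z ^ (-(n:ℝ) + (K:ℝ)) ≤ z ^ ((1:ℝ) - (n:ℝ)/2) :=
        Real.rpow_le_rpow_of_exponent_le hz1.le h3
      have h5 : z ^ ((1:ℝ) - (n:ℝ)/2) = z * z ^ (-(n:ℝ)/2) := by
        rw [show (1:ℝ) - (n:ℝ)/2 = 1 + (-(n:ℝ)/2) by ring, Real.rpow_add hz0, Real.rpow_one]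
      have h6 : z ^ (-(n:ℝ)/2) = Real.exp (-(Real.log z / 2) * n) := by
        rw [Real.rpow_def_of_pos hz0]
        congr 1
        ring
      rw [h5, h6] at h4
      exact h4
    calc ∑ k ∈ (Finset.range (n+1)).filter (fun k => 2*k < n), mdist p n k
        ≤ (z⁻¹)^n * ((z^K - 1)/(z-1)) := by
          rw [← hstep3]; exact le_trans hstep1 hstep2
      _ ≤ (z⁻¹)^n * (z^K / (z-1)) := hstep4
      _ = ((z⁻¹)^n * z^K) / (z-1) := by ring
      _ ≤ (z * Real.exp (-(Real.log z / 2) * n)) / (z-1) := by gcongr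
      _ = z / (z-1) * Real.exp (-(Real.log z / 2) * n) := by ring
  -- one-step Markov decomposition over full histories
  have hD : ∀ (n j m : ℕ),
      ℙ ({ω | X 0 ω = 0 ∧ X n ω = j} ∩ {ω | X (n+1) ω = m})
        = ℙ {ω | X 0 ω = 0 ∧ X n ω = j} * ENNReal.ofReal (p j m) := by
    intro n j m
    set E : (Fin (n+1) → ℕ) → Set Ω := fun v => {ω | ∀ i ≤ n, X i ω = seqOf n v i} with hE
    set G : (Fin (n+1) → ℕ) → Prop := fun v => seqOf n v 0 = 0 ∧ seqOf n v n = j with hG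
    have hsv_eq : ∀ (v : Fin (n+1) → ℕ) (i : ℕ) (h : i < n+1), seqOf n v i = v ⟨i, h⟩ := by
      intro v i h; exact dif_pos h
    have hEmeas : ∀ v, MeasurableSet (E v) := by
      intro v
      have hset : E v = ⋂ i ∈ Set.Iic n, X i ⁻¹' {seqOf n v i} := by
        ext ω
        simp only [hE, Set.mem_setOf_eq, Set.mem_iInter, Set.mem_Iic, Set.mem_preimage,
          Set.mem_singleton_iff]
      rw [hset]
      exact MeasurableSet.biInter (Set.to_countable _)
        (fun i _ => hX i (measurableSet_singleton _))
    have hEdisj : ∀ v w, v ≠ w → Disjoint (E v) (E w) := by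
      intro v w hvw
      obtain ⟨i0, hi0⟩ := Function.ne_iff.1 hvw
      rw [Set.disjoint_left]
      intro ω hv hw
      have h1 : X (i0 : ℕ) ω = seqOf n v i0 := hv (i0 : ℕ) (by omega)
      have h2 : X (i0 : ℕ) ω = seqOf n w i0 := hw (i0 : ℕ) (by omega)
      rw [hsv_eq v i0 i0.isLt] at h1
      rw [hsv_eq w i0 i0.isLt] at h2
      apply hi0
      rw [← Fin.eta i0 i0.isLt, ← h1, h2, Fin.eta]
    have hdecomp : {ω | X 0 ω = 0 ∧ X n ω = j} = ⋃ v, if G v then E v else ∅ := by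
      ext ω
      simp only [Set.mem_iUnion, Set.mem_setOf_eq]
      constructor
      · rintro ⟨h0, hn⟩
        refine ⟨fun i => X (i : ℕ) ω, ?_⟩
        have hGv : G (fun i : Fin (n+1) => X (i : ℕ) ω) := by
          constructor
          · rw [hsv_eq _ 0 (by omega)]; exact h0
          · rw [hsv_eq _ n (by omega)]; exact hn
        rw [if_pos hGv]
        intro i hi
        rw [hsv_eq _ i (by omega)]
      · rintro ⟨v, hv⟩
        by_cases hGv : G v
        · rw [if_pos hGv] at hv
          have h0 := hv 0 (Nat.zero_le n)
          have hn := hv n le_rfl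
          exact ⟨by rw [h0]; exact hGv.1, by rw [hn]; exact hGv.2⟩
        · rw [if_neg hGv] at hv; exact absurd hv (Set.notMem_empty ω)
    have hmeas_ite : ∀ v, MeasurableSet (if G v then E v else ∅) := by
      intro v
      by_cases hGv : G v
      · rw [if_pos hGv]; exact hEmeas v
      · rw [if_neg hGv]; exact MeasurableSet.empty
    have hdisj_ite : Pairwise (Function.onFun Disjoint (fun v => if G v then E v else ∅)) := by
      intro v w hvw
      show Disjoint (if G v then E v else ∅) (if G w then E w else ∅)
      by_cases hGv : G v
      · by_cases hGw : G w
        · rw [if_pos hGv, if_pos hGw]; exact hEdisj v w hvw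
        · rw [if_neg hGw]; exact Set.disjoint_empty _
      · rw [if_neg hGv]; exact Set.empty_disjoint _
    have hP1 : ℙ {ω | X 0 ω = 0 ∧ X n ω = j} = ∑' v, ℙ (if G v then E v else ∅) := by
      rw [hdecomp]
      exact measure_iUnion hdisj_ite hmeas_ite
    have hmemXm : MeasurableSet {ω | X (n+1) ω = m} := hX (n+1) (measurableSet_singleton m)
    have hU2 : {ω | X 0 ω = 0 ∧ X n ω = j} ∩ {ω | X (n+1) ω = m}
        = ⋃ v, ((if G v then E v else ∅) ∩ {ω | X (n+1) ω = m}) := by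
      rw [hdecomp, Set.iUnion_inter]
    have hdisj2 : Pairwise (Function.onFun Disjoint
        (fun v => (if G v then E v else ∅) ∩ {ω | X (n+1) ω = m})) := by
      intro v w hvw
      exact Disjoint.mono Set.inter_subset_left Set.inter_subset_left (hdisj_ite hvw)
    have hmeas2 : ∀ v, MeasurableSet ((if G v then E v else ∅) ∩ {ω | X (n+1) ω = m}) :=
      fun v => (hmeas_ite v).inter hmemXm
    have hstep : ∀ v, ℙ ((if G v then E v else ∅) ∩ {ω | X (n+1) ω = m})
        = ℙ (if G v then E v else ∅) * ENNReal.ofReal (p j m) := by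
      intro v
      by_cases hGv : G v
      · rw [if_pos hGv]
        have h1 : E v ∩ {ω | X (n+1) ω = m}
            = {ω | (∀ i ≤ n, X i ω = seqOf n v i) ∧ X (n+1) ω = m} := by
          ext ω
          simp only [hE, Set.mem_inter_iff, Set.mem_setOf_eq]
        rw [h1, hMarkov n (seqOf n v) m, hGv.2]
      · rw [if_neg hGv]; simp
    rw [hU2, measure_iUnion hdisj2 hmeas2, tsum_congr hstep, ENNReal.tsum_mul_right, ← hP1]
  -- identify the distribution of X n with mdist
  have hkey : ∀ n k, ℙ {ω | X 0 ω = 0 ∧ X n ω = k}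
      = ℙ {ω | X 0 ω = 0} * ENNReal.ofReal (mdist p n k) := by
    intro n
    induction n with
    | zero =>
      intro k
      by_cases hk : k = 0
      · subst hk
        have h1 : {ω | X 0 ω = 0 ∧ X 0 ω = 0} = {ω | X 0 ω = 0} := by
          ext ω; simp
        rw [h1]
        simp [mdist]
      · have h1 : {ω | X 0 ω = 0 ∧ X 0 ω = k} = ∅ := by
          ext ω
          simp only [Set.mem_setOf_eq, Set.mem_empty_iff_false, iff_false, not_and]
          intro h0 hk'
          exact hk (by rw [← hk', h0])
        rw [h1]
        simp [mdist, hk]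
    | succ n ih =>
      intro k
      have hdec : {ω | X 0 ω = 0 ∧ X (n+1) ω = k}
          = ⋃ jj : ℕ, ({ω | X 0 ω = 0 ∧ X n ω = jj} ∩ {ω | X (n+1) ω = k}) := by
        ext ω
        simp only [Set.mem_iUnion, Set.mem_inter_iff, Set.mem_setOf_eq]
        constructor
        · rintro ⟨h0, hk'⟩
          exact ⟨X n ω, ⟨h0, rfl⟩, hk'⟩
        · rintro ⟨jj, ⟨h0, _⟩, hk'⟩
          exact ⟨h0, hk'⟩
      have hdisjJ : Pairwise (Function.onFun Disjoint
          (fun jj : ℕ => {ω | X 0 ω = 0 ∧ X n ω = jj} ∩ {ω | X (n+1) ω = k})) := by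
        intro a b hab
        show Disjoint _ _
        rw [Set.disjoint_left]
        rintro ω ⟨⟨_, ha⟩, _⟩ ⟨⟨_, hb⟩, _⟩
        exact hab (by rw [← ha, hb])
      have hmeasJ : ∀ jj : ℕ, MeasurableSet
          ({ω | X 0 ω = 0 ∧ X n ω = jj} ∩ {ω | X (n+1) ω = k}) := by
        intro jj
        have h1 : {ω | X 0 ω = 0 ∧ X n ω = jj}
            = (X 0 ⁻¹' {0}) ∩ (X n ⁻¹' {jj}) := rfl
        have h2 : MeasurableSet {ω | X 0 ω = 0 ∧ X n ω = jj} := by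
          rw [h1]
          exact (hX 0 (measurableSet_singleton _)).inter (hX n (measurableSet_singleton _))
        exact h2.inter (hX (n+1) (measurableSet_singleton _))
      rw [hdec, measure_iUnion hdisjJ hmeasJ]
      have h1 : ∀ jj : ℕ, ℙ ({ω | X 0 ω = 0 ∧ X n ω = jj} ∩ {ω | X (n+1) ω = k})
          = ℙ {ω | X 0 ω = 0} * ENNReal.ofReal (mdist p n jj * p jj k) := by
        intro jj
        rw [hD n jj k, ih jj, ENNReal.ofReal_mul (mdist_nonneg hp0 n jj), mul_assoc]
      rw [tsum_congr h1, ENNReal.tsum_mul_left]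
      congr 1
      cases k with
      | zero =>
        rw [tsum_eq_sum (s := Finset.range (n+1)) (fun jj hj => by
          rw [mdist_eq_zero n jj (by
            have := Finset.mem_range.not.1 hj; omega)]
          simp)]
        rw [← ENNReal.ofReal_sum_of_nonneg
          (fun jj _ => mul_nonneg (mdist_nonneg hp0 n jj) (hp0 jj 0))]
        congr 1
      | succ k' =>
        rw [tsum_eq_single k' (fun jj hj => by
          rw [hpz jj (k'+1) (Nat.succ_ne_zero k') (by omega)]
          simp)]
        congr 1
  -- final assembly
  intro n
  have hAmeas : MeasurableSet {ω | X 0 ω = 0} := hX 0 (measurableSet_singleton 0)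
  rw [ProbabilityTheory.cond_apply hAmeas]
  have hset : {ω | X 0 ω = 0} ∩ {ω | (X n ω : ℝ) < n/2}
      = ⋃ k : ℕ, if 2*k < n then {ω | X 0 ω = 0 ∧ X n ω = k} else ∅ := by
    ext ω
    simp only [Set.mem_inter_iff, Set.mem_setOf_eq, Set.mem_iUnion]
    constructor
    · rintro ⟨h0, hlt⟩
      refine ⟨X n ω, ?_⟩
      have h2 : 2 * X n ω < n := by
        have h3 : (2 * X n ω : ℝ) < n := by linarith
        exact_mod_cast h3
      rw [if_pos h2]
      exact ⟨h0, rfl⟩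
    · rintro ⟨k, hk⟩
      by_cases h2 : 2*k < n
      · rw [if_pos h2] at hk
        obtain ⟨h0, hXn⟩ := hk
        refine ⟨h0, ?_⟩
        rw [hXn]
        have h3 : (2*k : ℝ) < n := by exact_mod_cast h2
        linarith
      · rw [if_neg h2] at hk
        exact absurd hk (Set.notMem_empty ω)
  have hdisjK : Pairwise (Function.onFun Disjoint
      (fun k : ℕ => if 2*k < n then {ω | X 0 ω = 0 ∧ X n ω = k} else ∅)) := by
    intro a b hab
    show Disjoint (if 2*a < n then {ω | X 0 ω = 0 ∧ X n ω = a} else ∅)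
      (if 2*b < n then {ω | X 0 ω = 0 ∧ X n ω = b} else ∅)
    by_cases ha : 2*a < n
    · by_cases hb : 2*b < n
      · rw [if_pos ha, if_pos hb, Set.disjoint_left]
        rintro ω ⟨_, ha'⟩ ⟨_, hb'⟩
        exact hab (by rw [← ha', hb'])
      · rw [if_neg hb]; exact Set.disjoint_empty _
    · rw [if_neg ha]; exact Set.empty_disjoint _
  have hmeasK : ∀ k : ℕ, MeasurableSet
      (if 2*k < n then {ω | X 0 ω = 0 ∧ X n ω = k} else ∅) := by
    intro k
    by_cases hk : 2*k < n
    · rw [if_pos hk]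
      have h1 : {ω | X 0 ω = 0 ∧ X n ω = k} = (X 0 ⁻¹' {0}) ∩ (X n ⁻¹' {k}) := rfl
      rw [h1]
      exact (hX 0 (measurableSet_singleton _)).inter (hX n (measurableSet_singleton _))
    · rw [if_neg hk]; exact MeasurableSet.empty
  rw [hset, measure_iUnion hdisjK hmeasK]
  have hterm : ∀ k : ℕ, ℙ (if 2*k < n then {ω | X 0 ω = 0 ∧ X n ω = k} else ∅)
      = if 2*k < n then ℙ {ω | X 0 ω = 0} * ENNReal.ofReal (mdist p n k) else 0 := by
    intro k
    by_cases hk : 2*k < n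
    · rw [if_pos hk, if_pos hk, hkey n k]
    · rw [if_neg hk, if_neg hk, measure_empty]
  rw [tsum_congr hterm]
  have hvanish : ∀ k : ℕ, k ∉ (Finset.range (n+1)).filter (fun k => 2*k < n) →
      (if 2*k < n then ℙ {ω | X 0 ω = 0} * ENNReal.ofReal (mdist p n k) else 0) = 0 := by
    intro k hk
    by_cases h2 : 2*k < n
    · exfalso
      apply hk
      rw [Finset.mem_filter, Finset.mem_range]
      exact ⟨by omega, h2⟩
    · rw [if_neg h2]
  rw [tsum_eq_sum (s := (Finset.range (n+1)).filter (fun k => 2*k < n)) hvanish]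
  have hsum_eq : ∑ k ∈ (Finset.range (n+1)).filter (fun k => 2*k < n),
      (if 2*k < n then ℙ {ω | X 0 ω = 0} * ENNReal.ofReal (mdist p n k) else 0)
      = ℙ {ω | X 0 ω = 0} * ENNReal.ofReal
          (∑ k ∈ (Finset.range (n+1)).filter (fun k => 2*k < n), mdist p n k) := by
    rw [Finset.sum_congr rfl (fun k hk => if_pos (Finset.mem_filter.1 hk).2), ← Finset.mul_sum,
      ← ENNReal.ofReal_sum_of_nonneg (fun k _ => mdist_nonneg hp0 n k)]
  rw [hsum_eq]
  have hfinal : ℙ {ω | X 0 ω = 0} * ENNReal.ofReal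
        (∑ k ∈ (Finset.range (n+1)).filter (fun k => 2*k < n), mdist p n k)
      ≤ ℙ {ω | X 0 ω = 0} * ENNReal.ofReal (z / (z-1) * Real.exp (-(Real.log z / 2) * n)) :=
    mul_le_mul_right (ENNReal.ofReal_le_ofReal (hreal n)) _
  calc (ℙ {ω | X 0 ω = 0})⁻¹ * (ℙ {ω | X 0 ω = 0} * ENNReal.ofReal
        (∑ k ∈ (Finset.range (n+1)).filter (fun k => 2*k < n), mdist p n k))
      ≤ (ℙ {ω | X 0 ω = 0})⁻¹ * (ℙ {ω | X 0 ω = 0}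
          * ENNReal.ofReal (z / (z-1) * Real.exp (-(Real.log z / 2) * n))) :=
        mul_le_mul_right hfinal _
    _ ≤ ENNReal.ofReal (z / (z-1) * Real.exp (-(Real.log z / 2) * n)) := by
        rcases eq_or_ne (ℙ {ω | X 0 ω = 0}) 0 with h0 | h0
        · rw [h0]
          simp
        · rw [← mul_assoc, ENNReal.inv_mul_cancel h0 (measure_ne_top _ _), one_mul]
end

section
/- Let a > 0, let U : [0,∞) → ℝ be continuous, let I ⊂ ℝ be an open interval, and let T > 0. Suppose h : [0,T] × I → ℝ is continuous, its partial derivative ∂_x h exists and is continuous on [0,T] × I, and for each x ∈ I the function t ↦ h_t(x) satisfies ∂_t h_t(x) = a cot(h_t(x) − U_t) with h_0(x) = x and sin(h_t(x) − U_t) ≠ 0 for all t ∈ [0,T]. Then for all x ∈ I and t ∈ [0,T], ∂_x h_t(x) = exp{ −a ∫_0^t ds / sin²(h_s(x) − U_s) }. -/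
open Set Real Filter intervalIntegral
open Topology MeasureTheory
open scoped Interval

lemma hasDerivAt_cot' {x : ℝ} (hx : Real.sin x ≠ 0) :
    HasDerivAt Real.cot (-(1 / Real.sin x ^ 2)) x := by
  have h : HasDerivAt (fun y => Real.cos y / Real.sin y)
      ((-Real.sin x * Real.sin x - Real.cos x * Real.cos x) / Real.sin x ^ 2) x :=
    (Real.hasDerivAt_cos x).div (Real.hasDerivAt_sin x) hx
  have heq : Real.cot = fun y => Real.cos y / Real.sin y :=
    funext fun y => Real.cot_eq_cos_div_sin y
  rw [heq]
  convert h using 1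
  have hpyth := Real.sin_sq_add_cos_sq x
  field_simp
  nlinarith [hpyth]


/-- **Spatial derivative of the angular radial Loewner flow.**
If `h_t(x)` solves `∂_t h_t(x) = a cot(h_t(x) - U_t)`, `h_0(x) = x`, with
`sin(h_t(x) - U_t) ≠ 0` on `[0,T]`, and `∂_x h` exists and is continuous on
`[0,T] × I`, then `∂_x h_t(x) = exp{-a ∫_0^t ds / sin²(h_s(x) - U_s)}`. -/
theorem radial_loewner_spatial_derivative
    (a : ℝ) (ha : 0 < a) (U : ℝ → ℝ) (hU : Continuous U)
    (I : Set ℝ) (hI_open : IsOpen I) (hI_conn : I.OrdConnected)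
    (T : ℝ) (hT : 0 < T)
    (h h' : ℝ → ℝ → ℝ)
    (hh_cont : ContinuousOn (fun p : ℝ × ℝ => h p.1 p.2) (Set.Icc (0 : ℝ) T ×ˢ I))
    (hh'_deriv : ∀ t ∈ Set.Icc (0 : ℝ) T, ∀ x ∈ I, HasDerivAt (h t) (h' t x) x)
    (hh'_cont : ContinuousOn (fun p : ℝ × ℝ => h' p.1 p.2) (Set.Icc (0 : ℝ) T ×ˢ I))
    (h_init : ∀ x ∈ I, h 0 x = x)
    (h_sin_ne : ∀ x ∈ I, ∀ t ∈ Set.Icc (0 : ℝ) T, Real.sin (h t x - U t) ≠ 0)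
    (h_ode : ∀ x ∈ I, ∀ t ∈ Set.Icc (0 : ℝ) T,
      HasDerivWithinAt (fun s => h s x) (a * Real.cot (h t x - U t))
        (Set.Icc (0 : ℝ) T) t) :
    ∀ x ∈ I, ∀ t ∈ Set.Icc (0 : ℝ) T,
      h' t x = Real.exp (-a * ∫ s in (0 : ℝ)..t, 1 / (Real.sin (h s x - U s)) ^ 2) := by
  intro x hx
  obtain ⟨ε, hε, hball⟩ : ∃ ε > 0, Metric.closedBall x ε ⊆ I := by
    obtain ⟨ε, hε, hb⟩ := Metric.isOpen_iff.mp hI_open x hx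
    exact ⟨ε / 2, by positivity, (Metric.closedBall_subset_ball (by linarith)).trans hb⟩
  have hI_mem : I ∈ 𝓝 x := hI_open.mem_nhds hx
  -- continuity of time-sections
  have hy_cont : ∀ y ∈ I, ContinuousOn (fun s => h s y) (Icc (0:ℝ) T) := fun y hy =>
    hh_cont.comp (continuous_id.prodMk continuous_const).continuousOn (fun s hs => ⟨hs, hy⟩)
  have hcot_cont : ∀ y ∈ I, ContinuousOn (fun s => a * Real.cot (h s y - U s)) (Icc (0:ℝ) T) := by
    intro y hy
    have h1 : ContinuousOn (fun s => h s y - U s) (Icc (0:ℝ) T) :=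
      (hy_cont y hy).sub hU.continuousOn
    have h2 : ContinuousOn
        (fun s => a * (Real.cos (h s y - U s) / Real.sin (h s y - U s))) (Icc (0:ℝ) T) :=
      continuousOn_const.mul ((Real.continuous_cos.comp_continuousOn h1).div
        (Real.continuous_sin.comp_continuousOn h1) (fun s hs => h_sin_ne y hy s hs))
    simpa [Real.cot_eq_cos_div_sin] using h2
  -- Step A: integral equation for h
  have key : ∀ y ∈ I, ∀ t ∈ Icc (0:ℝ) T,
      h t y = y + ∫ s in (0:ℝ)..t, a * Real.cot (h s y - U s) := by
    intro y hy t ht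
    have h0t : Icc (0:ℝ) t ⊆ Icc 0 T := Icc_subset_Icc le_rfl ht.2
    have hderiv : ∀ s ∈ Ioo (0:ℝ) t,
        HasDerivWithinAt (fun s => h s y) (a * Real.cot (h s y - U s)) (Ioi s) s := by
      intro s hs
      have hsT : s ∈ Icc (0:ℝ) T := ⟨hs.1.le, (hs.2.le.trans ht.2)⟩
      have hmem : Icc (0:ℝ) T ∈ 𝓝 s := Icc_mem_nhds hs.1 (hs.2.trans_le ht.2)
      exact ((h_ode y hy s hsT).hasDerivAt hmem).hasDerivWithinAt
    have hint : IntervalIntegrable (fun s => a * Real.cot (h s y - U s)) volume 0 t :=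
      ((hcot_cont y hy).mono (by rw [uIcc_of_le ht.1]; exact h0t)).intervalIntegrable
    have := integral_eq_sub_of_hasDeriv_right_of_le ht.1 ((hy_cont y hy).mono h0t) hderiv hint
    rw [this, h_init y hy]; ring
  -- the coefficient and the parametric integrand
  set q : ℝ → ℝ := fun s => -a * (1 / Real.sin (h s x - U s) ^ 2) with hqdef
  set G : ℝ × ℝ → ℝ := fun p => -a * (1 / Real.sin (h p.1 p.2 - U p.1) ^ 2) * h' p.1 p.2
    with hGdef
  have hG_cont : ContinuousOn G (Icc (0:ℝ) T ×ˢ I) := by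
    have h1 : ContinuousOn (fun p : ℝ × ℝ => h p.1 p.2 - U p.1) (Icc (0:ℝ) T ×ˢ I) :=
      hh_cont.sub (hU.comp continuous_fst).continuousOn
    exact (continuousOn_const.mul (continuousOn_const.div
      ((Real.continuous_sin.comp_continuousOn h1).pow 2)
      (fun p hp => pow_ne_zero 2 (h_sin_ne p.2 hp.2 p.1 hp.1)))).mul hh'_cont
  obtain ⟨C, hC⟩ := (isCompact_Icc.prod (isCompact_closedBall x ε)).exists_bound_of_continuousOn
    (hG_cont.mono (prod_mono_right hball))
  -- Step B: the integral equation for h' t x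
  have hfe : ∀ t ∈ Icc (0:ℝ) T, h' t x = 1 + ∫ s in (0:ℝ)..t, q s * h' s x := by
    intro t ht
    have hIsub : Ι (0:ℝ) t ⊆ Icc (0:ℝ) T := by
      rw [uIoc_of_le ht.1]; exact (Ioc_subset_Icc_self).trans (Icc_subset_Icc le_rfl ht.2)
    have hmeas : ∀ᶠ y in 𝓝 x, AEStronglyMeasurable
        (fun s => a * Real.cot (h s y - U s)) (volume.restrict (Ι (0:ℝ) t)) := by
      filter_upwards [hI_mem] with y hy
      exact ((hcot_cont y hy).mono hIsub).aestronglyMeasurable measurableSet_uIoc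
    have huIcc : uIcc (0:ℝ) t ⊆ Icc (0:ℝ) T := by
      rw [uIcc_of_le ht.1]; exact Icc_subset_Icc le_rfl ht.2
    have hint : IntervalIntegrable (fun s => a * Real.cot (h s x - U s)) volume 0 t :=
      ((hcot_cont x hx).mono huIcc).intervalIntegrable
    have hG'x_cont : ContinuousOn (fun s => G (s, x)) (Icc (0:ℝ) T) :=
      hG_cont.comp (continuous_id.prodMk continuous_const).continuousOn
        (fun s hs => ⟨hs, hx⟩)
    have hmeas' : AEStronglyMeasurable (fun s => G (s, x)) (volume.restrict (Ι (0:ℝ) t)) :=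
      (hG'x_cont.mono hIsub).aestronglyMeasurable measurableSet_uIoc
    have hbound : ∀ᵐ s ∂volume, s ∈ Ι (0:ℝ) t → ∀ y ∈ Metric.ball x ε, ‖G (s, y)‖ ≤ C := by
      filter_upwards with s hs y hy
      exact hC (s, y) ⟨hIsub hs, Metric.ball_subset_closedBall hy⟩
    have hdiff : ∀ᵐ s ∂volume, s ∈ Ι (0:ℝ) t → ∀ y ∈ Metric.ball x ε,
        HasDerivAt (fun y => a * Real.cot (h s y - U s)) (G (s, y)) y := by
      filter_upwards with s hs y hyb
      have hy : y ∈ I := hball (Metric.ball_subset_closedBall hyb)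
      have hsT : s ∈ Icc (0:ℝ) T := hIsub hs
      have hd : HasDerivAt (fun y => h s y - U s) (h' s y) y :=
        (hh'_deriv s hsT y hy).sub_const (U s)
      have hcomp := ((hasDerivAt_cot' (h_sin_ne y hy s hsT)).comp y hd).const_mul a
      have : HasDerivAt (fun y => a * Real.cot (h s y - U s))
          (a * (-(1 / Real.sin (h s y - U s) ^ 2) * h' s y)) y := by
        simpa [Function.comp] using hcomp
      convert this using 1
      simp only [hGdef]; ring
    have hmain := intervalIntegral.hasDerivAt_integral_of_dominated_loc_of_deriv_le
      (F := fun y s => a * Real.cot (h s y - U s)) (F' := fun y s => G (s, y))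
      (bound := fun _ => C) (Metric.ball_mem_nhds x hε) hmeas hint hmeas' hbound intervalIntegrable_const hdiff
    have hD : HasDerivAt (fun y => y + ∫ s in (0:ℝ)..t, a * Real.cot (h s y - U s))
        (1 + ∫ s in (0:ℝ)..t, G (s, x)) x := (hasDerivAt_id x).add hmain.2
    have hD' : HasDerivAt (h t) (1 + ∫ s in (0:ℝ)..t, G (s, x)) x :=
      hD.congr_of_eventuallyEq (Filter.eventually_of_mem hI_mem fun y hy => key y hy t ht)
    have huniq : h' t x = 1 + ∫ s in (0:ℝ)..t, G (s, x) :=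
      (hh'_deriv t ht x hx).unique hD'
    simpa only [hGdef, hqdef] using huniq
  -- continuity facts for step C
  have hf_cont : ContinuousOn (fun t => h' t x) (Icc (0:ℝ) T) :=
    hh'_cont.comp (continuous_id.prodMk continuous_const).continuousOn (fun s hs => ⟨hs, hx⟩)
  have hq_cont : ContinuousOn q (Icc (0:ℝ) T) := by
    have h1 : ContinuousOn (fun s => h s x - U s) (Icc (0:ℝ) T) :=
      (hy_cont x hx).sub hU.continuousOn
    exact continuousOn_const.mul (continuousOn_const.div
      ((Real.continuous_sin.comp_continuousOn h1).pow 2)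
      (fun s hs => pow_ne_zero 2 (h_sin_ne x hx s hs)))
  have hqf_cont : ContinuousOn (fun s => q s * h' s x) (Icc (0:ℝ) T) := hq_cont.mul hf_cont
  -- FTC within the interval
  have hFTC : ∀ (c : ℝ → ℝ), ContinuousOn c (Icc (0:ℝ) T) → ∀ t ∈ Icc (0:ℝ) T,
      HasDerivWithinAt (fun u => ∫ s in (0:ℝ)..u, c s) (c t) (Icc (0:ℝ) T) t := by
    intro c hc t ht
    haveI : Fact (t ∈ Icc (0:ℝ) T) := ⟨ht⟩
    refine intervalIntegral.integral_hasDerivWithinAt_right ?_ ?_ (hc t ht)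
    · exact (hc.mono (by rw [uIcc_of_le ht.1]; exact Icc_subset_Icc le_rfl ht.2)).intervalIntegrable
    · exact ⟨Icc (0:ℝ) T, self_mem_nhdsWithin, hc.aestronglyMeasurable measurableSet_Icc⟩
  set Q : ℝ → ℝ := fun u => ∫ s in (0:ℝ)..u, q s with hQdef
  have hQD : ∀ t ∈ Icc (0:ℝ) T, HasDerivWithinAt Q (q t) (Icc (0:ℝ) T) t := hFTC q hq_cont
  have hfD : ∀ t ∈ Icc (0:ℝ) T,
      HasDerivWithinAt (fun u => h' u x) (q t * h' t x) (Icc (0:ℝ) T) t := by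
    intro t ht
    have := ((hFTC _ hqf_cont t ht).const_add 1)
    exact this.congr (fun u hu => hfe u hu) (hfe t ht)
  set φ : ℝ → ℝ := fun u => h' u x * Real.exp (-Q u) with hφdef
  have hφD : ∀ t ∈ Icc (0:ℝ) T, HasDerivWithinAt φ 0 (Icc (0:ℝ) T) t := by
    intro t ht
    have h2 := ((hQD t ht).fun_neg).exp
    have h3 := (hfD t ht).fun_mul h2
    refine h3.congr_deriv ?_
    ring
  have hφconst : ∀ t ∈ Icc (0:ℝ) T, φ t = φ 0 := by
    intro t ht
    have h0t : Icc (0:ℝ) t ⊆ Icc 0 T := Icc_subset_Icc le_rfl ht.2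
    have hcont : ContinuousOn φ (Icc (0:ℝ) t) := fun u hu =>
      ((hφD u (h0t hu)).continuousWithinAt).mono h0t
    have hderiv : ∀ s ∈ Ioo (0:ℝ) t, HasDerivWithinAt φ ((fun _ : ℝ => (0:ℝ)) s) (Ioi s) s := by
      intro s hs
      exact (((hφD s ⟨hs.1.le, hs.2.le.trans ht.2⟩).hasDerivAt
        (Icc_mem_nhds hs.1 (hs.2.trans_le ht.2))).hasDerivWithinAt)
    have := integral_eq_sub_of_hasDeriv_right_of_le ht.1 hcont hderiv intervalIntegrable_const
    simp only [intervalIntegral.integral_const, smul_zero] at this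
    linarith [this]
  have h0T : (0:ℝ) ∈ Icc (0:ℝ) T := ⟨le_rfl, hT.le⟩
  have hf0 : h' 0 x = 1 := by
    have hid : HasDerivAt (h 0) 1 x :=
      (hasDerivAt_id x).congr_of_eventuallyEq (Filter.eventually_of_mem hI_mem fun y hy => h_init y hy)
    exact (hh'_deriv 0 h0T x hx).unique hid
  have hφ0 : φ 0 = 1 := by
    simp only [hφdef, hQdef, intervalIntegral.integral_same, neg_zero, Real.exp_zero, mul_one, hf0]
  -- conclusion
  intro t ht
  have hφt : h' t x * Real.exp (-Q t) = 1 := by rw [← hφ0]; exact hφconst t ht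
  have hft : h' t x = Real.exp (Q t) := by
    have := congrArg (· * Real.exp (Q t)) hφt
    simpa [mul_assoc, ← Real.exp_add] using this
  rw [hft]
  congr 1
  simp only [hQdef, hqdef]
  rw [← intervalIntegral.integral_const_mul]
end
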